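/- Let Ω be a probability space, β* ∈ ℝ, and for each subset B of {1,...,L} let C(B) : Ω → Set ℝ be a random set and S(B) an event (the pretest rejecting). Suppose there exists B̃ with |B̃| = U−1, B* ⊆ B̃, P(β* ∈ C(B̃)) ≥ 1 − α₂, and P(S(B̃)) ≤ α₁. Then the random set C'(ω) = ⋃ {C(B)(ω) : |B| = U−1, ω ∉ S(B)} satisfies P(β* ∈ C') ≥ 1 − α₁ − α₂. -/

import Mathlib

open MeasureTheory
open scoped ENNReal

/-- Theorem 2 of Kang, Cai and Small: the pretested union confidence interval
`C'(ω) = ⋃ {C(B)(ω) : |B| = U - 1, pretest for B does not reject}` has coverage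
at least `1 - α₁ - α₂`, provided some `B̃ ⊇ B*` of size `U - 1` has a level
`1 - α₂` confidence interval and a pretest of size at most `α₁`. -/
theorem stmt_3 {Ω : Type*} [MeasurableSpace Ω] (P : Measure Ω) [IsProbabilityMeasure P]
    (L U : ℕ) (hUL : U ≤ L) (α₁ α₂ : ℝ≥0∞) (hα₁ : α₁ ≤ 1) (hα₂ : α₂ ≤ 1)
    (βstar : ℝ) (C : Finset ℕ → Ω → Set ℝ) (S : Finset ℕ → Set Ω)
    (Bstar : Finset ℕ)
    (hex : ∃ Btilde : Finset ℕ, Btilde ⊆ Finset.Icc 1 L ∧ Btilde.card = U - 1 ∧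
      Bstar ⊆ Btilde ∧ 1 - α₂ ≤ P {ω | βstar ∈ C Btilde ω} ∧ P (S Btilde) ≤ α₁) :
    1 - α₁ - α₂ ≤
      P {ω | ∃ B : Finset ℕ, B ⊆ Finset.Icc 1 L ∧ B.card = U - 1 ∧ ω ∉ S B ∧ βstar ∈ C B ω} := by
  obtain ⟨B, hBL, hBcard, _, hC, hS⟩ := hex
  set A := {ω | βstar ∈ C B ω}
  have hsub : A \ S B ⊆ {ω | ∃ B : Finset ℕ, B ⊆ Finset.Icc 1 L ∧ B.card = U - 1 ∧ ω ∉ S B ∧ βstar ∈ C B ω} := by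
    rintro ω ⟨hA, hnS⟩
    exact ⟨B, hBL, hBcard, hnS, hA⟩
  refine le_trans ?_ (measure_mono hsub)
  have h1 : P A ≤ P (A \ S B) + P (S B) := by
    refine le_trans (measure_mono ?_) (measure_union_le _ _)
    intro ω hω
    by_cases h : ω ∈ S B
    · exact Or.inr h
    · exact Or.inl ⟨hω, h⟩
  have h2 : P A - α₁ ≤ P (A \ S B) :=
    tsub_le_iff_right.mpr (h1.trans (add_le_add_right hS _))
  calc 1 - α₁ - α₂ = 1 - α₂ - α₁ := by rw [tsub_tsub, tsub_tsub, add_comm]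
    _ ≤ P A - α₁ := tsub_le_tsub_right hC _
    _ ≤ P (A \ S B) := h2
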